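/- Let n ≥ 1 and let a binary sequence of length M contain exactly K ones and M − K zeros, with K < M, all cyclic rotations equally likely. Define Ā(t) = t − (number of ones among the first t entries). If (M − K)/M ≤ c − ε for some c ∈ (0,1) and ε > 0, then the probability that Ā(t) < c·t for all t = 1,...,M is at least ε·M/((c)·M) ≥ ε/c > 0; in particular, with c = (1 − p̂) + 2ε', (M−K)/M ≤ (1−p̂) + ε', the probability is at least ε'/((1 − p̂) + 2ε'). -/

import Mathlib

open scoped Classical


namespace BallotAux

def Good (S : ℕ → ℝ) (j : ℕ) : Prop := ∀ t, 1 ≤ t → S (j + t) < S j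

lemma per_iter {S : ℕ → ℝ} {M : ℕ} {D : ℝ} (hper : ∀ t, S (t + M) = S t - D) :
    ∀ k t, S (t + k * M) = S t - (k : ℝ) * D := by
  intro k
  induction k with
  | zero => intro t; simp
  | succ k ih =>
      intro t
      have h1 : t + (k + 1) * M = (t + k * M) + M := by ring
      rw [h1, hper, ih]
      push_cast
      ring

lemma decomp {M : ℕ} (hM : 1 ≤ M) (t : ℕ) (ht : 1 ≤ t) :
    ∃ u k, 1 ≤ u ∧ u ≤ M ∧ t = u + k * M := by
  refine ⟨(t - 1) % M + 1, (t - 1) / M, by omega, ?_, ?_⟩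
  · have := Nat.mod_lt (t - 1) (show 0 < M by omega)
    omega
  · have h := Nat.mod_add_div (t - 1) M
    have h3 : (t - 1) / M * M = M * ((t - 1) / M) := Nat.mul_comm _ _
    omega

lemma good_period {S : ℕ → ℝ} {M : ℕ} {D : ℝ} (hper : ∀ t, S (t + M) = S t - D)
    (j : ℕ) : Good S (j + M) ↔ Good S j := by
  have key : ∀ t, S (j + M + t) = S (j + t) - D := by
    intro t
    have : j + M + t = (j + t) + M := by ring
    rw [this, hper]
  constructor
  · intro h t ht
    have := h t ht
    rw [key t, hper] at this
    linarith
  · intro h t ht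
    rw [key t, hper]
    linarith [h t ht]

lemma exists_good_in {S : ℕ → ℝ} {M : ℕ} {D : ℝ} (hM : 1 ≤ M)
    (hper : ∀ t, S (t + M) = S t - D) (hD : 0 < D) (j : ℕ) :
    ∃ j', j < j' ∧ j' ≤ j + M ∧ Good S j' ∧ ∀ u, j < u → u ≤ j + M → S u ≤ S j' := by
  classical
  set W : Finset ℕ := Finset.Icc (j + 1) (j + M) with hW
  have hWne : W.Nonempty := ⟨j + 1, by simp [hW]; omega⟩
  obtain ⟨m, hmW, hm⟩ := W.exists_max_image S hWne
  set A : Finset ℕ := W.filter (fun t => ∀ u ∈ W, S u ≤ S t) with hA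
  have hAne : A.Nonempty := ⟨m, by simp only [hA, Finset.mem_filter]; exact ⟨hmW, hm⟩⟩
  set j' := A.max' hAne with hj'
  have hj'A : j' ∈ A := A.max'_mem hAne
  have hj'W : j' ∈ W := (Finset.mem_filter.mp hj'A).1
  have hmax : ∀ u ∈ W, S u ≤ S j' := (Finset.mem_filter.mp hj'A).2
  have hj'lo : j < j' := by
    have := Finset.mem_Icc.mp hj'W; omega
  have hj'hi : j' ≤ j + M := (Finset.mem_Icc.mp hj'W).2
  have hstrict : ∀ v ∈ W, j' < v → S v < S j' := by
    intro v hvW hv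
    rcases lt_or_eq_of_le (hmax v hvW) with h | h
    · exact h
    · exfalso
      have hvA : v ∈ A := by
        simp only [hA, Finset.mem_filter]
        exact ⟨hvW, fun u hu => h ▸ hmax u hu⟩
      have := A.le_max' v hvA
      omega
  refine ⟨j', hj'lo, hj'hi, ?_, fun u hu1 hu2 => hmax u (Finset.mem_Icc.mpr ⟨by omega, hu2⟩)⟩
  intro t ht
  by_cases hcase : j' + t ≤ j + M
  · exact hstrict _ (Finset.mem_Icc.mpr ⟨by omega, hcase⟩) (by omega)
  · obtain ⟨u, k, hu1, huM, hdec⟩ := decomp hM (j' + t - j) (by omega)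
    have hk : 1 ≤ k := by
      by_contra hcon
      have hk0 : k = 0 := by omega
      subst hk0
      simp at hdec
      omega
    have hveq : j' + t = (j + u) + k * M := by omega
    have hSv : S (j' + t) = S (j + u) - (k : ℝ) * D := by rw [hveq, per_iter hper]
    have hle : S (j + u) ≤ S j' := hmax _ (Finset.mem_Icc.mpr ⟨by omega, by omega⟩)
    have hkD : (1 : ℝ) * D ≤ (k : ℝ) * D := by
      apply mul_le_mul_of_nonneg_right _ (le_of_lt hD)
      exact_mod_cast hk
    rw [hSv]
    linarith

lemma goodM_iff {S : ℕ → ℝ} {M : ℕ} {D : ℝ} (hM : 1 ≤ M)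
    (hper : ∀ t, S (t + M) = S t - D) (hD : 0 < D) (j : ℕ) :
    Good S j ↔ ∀ t, 1 ≤ t → t ≤ M → S (j + t) < S j := by
  constructor
  · intro h t ht _; exact h t ht
  · intro h t ht
    obtain ⟨u, k, hu1, huM, hdec⟩ := decomp hM t ht
    have : j + t = (j + u) + k * M := by omega
    rw [this, per_iter hper]
    have hkD : 0 ≤ (k : ℝ) * D := by positivity
    linarith [h u hu1 huM]

lemma card_shift {S : ℕ → ℝ} {M : ℕ} {D : ℝ} (hM : 1 ≤ M)
    (hper : ∀ t, S (t + M) = S t - D) :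
    ∀ a, ((Finset.Ico a (a + M)).filter (fun j => Good S j)).card
       = ((Finset.Ico 0 M).filter (fun j => Good S j)).card := by
  classical
  intro a
  induction a with
  | zero => simp
  | succ a ih =>
      rw [← ih]
      have h1 : Finset.Ico a (a + M + 1) = insert (a + M) (Finset.Ico a (a + M)) := by
        ext v; simp only [Finset.mem_Ico, Finset.mem_insert]; omega
      have h2 : Finset.Ico a (a + M + 1) = insert a (Finset.Ico (a + 1) (a + M + 1)) := by
        ext v; simp only [Finset.mem_Ico, Finset.mem_insert]; omega
      have h3 : a + 1 + M = a + M + 1 := by omega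
      rw [h3]
      have hnm1 : a + M ∉ Finset.Ico a (a + M) := by simp
      have hnm2 : a ∉ Finset.Ico (a + 1) (a + M + 1) := by simp
      have hgp : Good S (a + M) ↔ Good S a := good_period hper a
      have e1 : ((Finset.Ico a (a + M + 1)).filter (fun j => Good S j)).card
          = ((Finset.Ico a (a + M)).filter (fun j => Good S j)).card
            + (if Good S (a + M) then 1 else 0) := by
        rw [h1, Finset.filter_insert]
        split
        · rw [Finset.card_insert_of_notMem (by simp [Finset.mem_filter, hnm1])]
        · simp
      have e2 : ((Finset.Ico a (a + M + 1)).filter (fun j => Good S j)).card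
          = ((Finset.Ico (a + 1) (a + M + 1)).filter (fun j => Good S j)).card
            + (if Good S a then 1 else 0) := by
        rw [h2, Finset.filter_insert]
        split
        · rw [Finset.card_insert_of_notMem (by simp [Finset.mem_filter, hnm2])]
        · simp
      by_cases hga : Good S a
      · simp [hga, hgp.mpr hga] at e1 e2; omega
      · have : ¬ Good S (a + M) := fun h => hga (hgp.mp h)
        simp [hga, this] at e1 e2; omega

end BallotAux


/-- Application of the cyclic Ballot Theorem: for a binary sequence of length
`M` with exactly `K` ones (extended periodically) and a uniformly random
cyclic shift, if the zero-density `(M-K)/M ≤ c - ε`, then the fraction of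
shifts `j` for which the failure count `Ā(t) = t - (ones among first t)` stays
strictly below `c·t` for all `t = 1,…,M` is at least `ε/c > 0`. -/
theorem ballot_application (M K : ℕ) (hM : 1 ≤ M) (hK : K < M)
    (x : ℕ → ℕ) (hx01 : ∀ j, x j = 0 ∨ x j = 1)
    (hper : ∀ j, x (j + M) = x j)
    (hsum : ∑ j ∈ Finset.range M, x j = K)
    (c ε : ℝ) (hc : 0 < c) (hc1 : c < 1) (hε : 0 < ε)
    (hslope : ((M : ℝ) - K) / M ≤ c - ε)
    (N : ℕ)
    (hN : N = Finset.card ((Finset.range M).filter (fun j =>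
      ∀ t ∈ Finset.Icc 1 M,
        ((t : ℝ) - ∑ s ∈ Finset.Ico j (j + t), (x s : ℝ)) < c * t))) :
    ε / c ≤ (N : ℝ) / M ∧ 0 < (N : ℝ) / M := by
  classical
  obtain ⟨S, hS⟩ : ∃ S : ℕ → ℝ, ∀ u : ℕ, S u = ∑ s ∈ Finset.Ico 0 u, (1 - (x s : ℝ) - c) :=
    ⟨_, fun u => rfl⟩
  set D : ℝ := c * M - ((M : ℝ) - K) with hD
  have hMpos : (0 : ℝ) < M := by exact_mod_cast hM
  -- sum of x over any window of length M is K
  have hwin : ∀ t, ∑ s ∈ Finset.Ico t (t + M), x s = K := by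
    intro t
    induction t with
    | zero => rw [show 0 + M = M from (Nat.zero_add M), ← Finset.range_eq_Ico]; exact hsum
    | succ t ih =>
        have h1 : Finset.Ico t (t + M) = insert t (Finset.Ico (t + 1) (t + M)) := by
          ext v; simp only [Finset.mem_Ico, Finset.mem_insert]; omega
        have h2 : Finset.Ico (t + 1) (t + 1 + M) = insert (t + M) (Finset.Ico (t + 1) (t + M)) := by
          ext v; simp only [Finset.mem_Ico, Finset.mem_insert]; omega
        rw [h2, Finset.sum_insert (by simp), hper]
        rw [h1, Finset.sum_insert (by simp)] at ih
        omega
  have hIco : ∀ (j t : ℕ), S (j + t) - S j = ∑ s ∈ Finset.Ico j (j + t), (1 - (x s : ℝ) - c) := by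
    intro j t
    have h := Finset.sum_Ico_consecutive (fun s => (1 - (x s : ℝ) - c))
      (Nat.zero_le j) (Nat.le_add_right j t)
    rw [hS, hS]
    linarith
  have hsumIco : ∀ (j t : ℕ), ∑ s ∈ Finset.Ico j (j + t), (1 - (x s : ℝ) - c)
      = (t : ℝ) - (∑ s ∈ Finset.Ico j (j + t), (x s : ℝ)) - c * t := by
    intro j t
    rw [Finset.sum_sub_distrib, Finset.sum_sub_distrib, Finset.sum_const, Finset.sum_const,
      Nat.card_Ico, Nat.add_sub_cancel_left]
    simp [nsmul_eq_mul]
    ring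
  have hperS : ∀ t, S (t + M) = S t - D := by
    intro t
    have h1 := hIco t M
    have h2 := hsumIco t M
    have h3 : ∑ s ∈ Finset.Ico t (t + M), (x s : ℝ) = (K : ℝ) := by
      have := hwin t
      push_cast [← this]
      rfl
    rw [h2, h3] at h1
    simp only [hD]
    linarith
  have hMK : ((M : ℝ) - K) ≤ (c - ε) * M := by
    have := (div_le_iff₀ hMpos).mp hslope
    linarith
  have hεM : ε * M ≤ D := by simp only [hD]; nlinarith
  have hDpos : 0 < D := lt_of_lt_of_le (by positivity) hεM
  -- predicate equivalence
  have hpred : ∀ j, (∀ t ∈ Finset.Icc 1 M,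
      ((t : ℝ) - ∑ s ∈ Finset.Ico j (j + t), (x s : ℝ)) < c * t) ↔ BallotAux.Good S j := by
    intro j
    rw [BallotAux.goodM_iff hM hperS hDpos]
    constructor
    · intro h t h1 h2
      have hh := h t (Finset.mem_Icc.mpr ⟨h1, h2⟩)
      have e := hIco j t
      have e2 := hsumIco j t
      linarith
    · intro h t ht
      obtain ⟨h1, h2⟩ := Finset.mem_Icc.mp ht
      have hh := h t h1 h2
      have e := hIco j t
      have e2 := hsumIco j t
      linarith
  have hNg : N = ((Finset.Ico 0 M).filter (fun j => BallotAux.Good S j)).card := by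
    rw [hN]
    congr 1
    ext j
    simp only [Finset.mem_filter, Finset.mem_range, Finset.mem_Ico]
    constructor
    · rintro ⟨h1, h2⟩; exact ⟨⟨Nat.zero_le _, h1⟩, (hpred j).mp h2⟩
    · rintro ⟨h1, h2⟩; exact ⟨h1.2, (hpred j).mpr h2⟩
  -- next-good-point machinery
  have hne : ∀ j, {t | j < t ∧ BallotAux.Good S t}.Nonempty := by
    intro j
    obtain ⟨j', h1, _, h3, _⟩ := BallotAux.exists_good_in hM hperS hDpos j
    exact ⟨j', h1, h3⟩
  set next : ℕ → ℕ := fun j => sInf {t | j < t ∧ BallotAux.Good S t} with hnextdef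
  have hnext_mem : ∀ j, j < next j ∧ BallotAux.Good S (next j) := fun j => Nat.sInf_mem (hne j)
  have hnext_min : ∀ j t, j < t → BallotAux.Good S t → next j ≤ t :=
    fun j t h1 h2 => Nat.sInf_le ⟨h1, h2⟩
  have hstep : ∀ j, BallotAux.Good S j → S j - c ≤ S (next j) := by
    intro j hj
    obtain ⟨j', h1, h2, h3, h4⟩ := BallotAux.exists_good_in hM hperS hDpos j
    have hx1 : S (j + 1) = S j + (1 - (x j : ℝ) - c) := by
      rw [hS, hS, Finset.sum_Ico_succ_top (Nat.zero_le j)]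
    have hSj1 : S (j + 1) < S j := hj 1 le_rfl
    have hxj : x j = 1 := by
      rcases hx01 j with h0 | h0
      · exfalso; rw [h0] at hx1; push_cast at hx1; linarith
      · exact h0
    have hSj1' : S (j + 1) = S j - c := by rw [hx1, hxj]; push_cast; ring
    have hle1 : S j - c ≤ S j' := by
      have := h4 (j + 1) (by omega) (by omega)
      linarith
    have hnn : next j ≤ j' := hnext_min j j' h1 h3
    rcases lt_or_eq_of_le hnn with h | h
    · have hg := (hnext_mem j).2
      have hlt := hg (j' - next j) (by omega)
      rw [show next j + (j' - next j) = j' by omega] at hlt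
      linarith
    · rw [h]; linarith
  obtain ⟨g0, hg0lo, hg0hi, hg0, _⟩ := BallotAux.exists_good_in hM hperS hDpos 0
  set g : ℕ → ℕ := fun n => next^[n] g0 with hgdef
  have hg0' : g 0 = g0 := rfl
  have hgsucc : ∀ n, g (n + 1) = next (g n) := fun n => Function.iterate_succ_apply' next n g0
  have hggood : ∀ n, BallotAux.Good S (g n) := by
    intro n
    induction n with
    | zero => exact hg0
    | succ n ih => rw [hgsucc]; exact (hnext_mem _).2
  have hgmono : StrictMono g := by
    apply strictMono_nat_of_lt_succ
    intro n
    rw [hgsucc]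
    exact (hnext_mem _).1
  have hSdrop : ∀ n, S g0 - n * c ≤ S (g n) := by
    intro n
    induction n with
    | zero => simp [hg0']
    | succ n ih =>
        rw [hgsucc]
        have := hstep (g n) (hggood n)
        push_cast
        linarith
  have hcover : ∀ t, BallotAux.Good S t → g0 < t → ∃ n, g n = t := by
    intro t ht hgt
    have hne2 : {n | t ≤ g n}.Nonempty := ⟨t, hgmono.le_apply⟩
    have hmem : t ≤ g (sInf {n | t ≤ g n}) := Nat.sInf_mem hne2
    set n' := sInf {n | t ≤ g n} with hn'
    have hn'pos : n' ≠ 0 := by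
      intro h0
      rw [h0, hg0'] at hmem
      omega
    obtain ⟨m, hm⟩ : ∃ m, n' = m + 1 := ⟨n' - 1, by omega⟩
    have hmlt : ¬ t ≤ g m := by
      have h := Nat.notMem_of_lt_sInf (s := {n | t ≤ g n}) (m := m) (by rw [← hn']; omega)
      simpa using h
    have hle : g (m + 1) ≤ t := by
      rw [hgsucc]
      exact hnext_min (g m) t (by omega) ht
    rw [hm] at hmem
    exact ⟨m + 1, le_antisymm hle hmem⟩
  have hgM : BallotAux.Good S (g0 + M) := (BallotAux.good_period hperS g0).mpr hg0
  obtain ⟨nstar, hnstar⟩ := hcover (g0 + M) hgM (by omega)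
  have hDn : D ≤ (nstar : ℝ) * c := by
    have h1 := hSdrop nstar
    rw [hnstar, hperS g0] at h1
    linarith
  have hn0 : 0 < nstar := by
    by_contra h
    have : nstar = 0 := by omega
    rw [this, hg0'] at hnstar
    omega
  have hset : (Finset.Ico g0 (g0 + M)).filter (fun j => BallotAux.Good S j)
      = (Finset.range nstar).image g := by
    ext t
    simp only [Finset.mem_filter, Finset.mem_Ico, Finset.mem_image, Finset.mem_range]
    constructor
    · rintro ⟨⟨h1, h2⟩, h3⟩
      rcases eq_or_lt_of_le h1 with he | hlt
      · exact ⟨0, hn0, by rw [hg0']; exact he⟩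
      · obtain ⟨n, hn⟩ := hcover t h3 hlt
        refine ⟨n, ?_, hn⟩
        have : g n < g nstar := by rw [hn, hnstar]; exact h2
        exact hgmono.lt_iff_lt.mp this
    · rintro ⟨n, hn, rfl⟩
      refine ⟨⟨?_, ?_⟩, hggood n⟩
      · have : g 0 ≤ g n := hgmono.monotone (Nat.zero_le n)
        rw [hg0'] at this
        exact this
      · have : g n < g nstar := hgmono hn
        rw [hnstar] at this
        exact this
  have hcard : ((Finset.Ico g0 (g0 + M)).filter (fun j => BallotAux.Good S j)).card = nstar := by
    rw [hset, Finset.card_image_of_injective _ hgmono.injective, Finset.card_range]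
  have hNn : N = nstar := by
    rw [hNg, ← BallotAux.card_shift hM hperS g0, hcard]
  have hNr : (N : ℝ) = nstar := by exact_mod_cast hNn
  have hmain : ε / c ≤ (N : ℝ) / M := by
    rw [div_le_div_iff₀ hc hMpos]
    rw [hNr]
    linarith
  exact ⟨hmain, lt_of_lt_of_le (div_pos hε hc) hmain⟩
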